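/- Let n ≥ 2 and work in the polynomial ring ℤ[x_1,…,x_{n−1}, y_1,…,y_{n−1}, z_1,…,z_n]. Define P̂_n = Σ_{σ ∈ S_n} sgn(σ) · Π_{ℓ=1}^{n−1} [ (Π_{k=1}^{ℓ} (1 + y_ℓ·z_{σ(k)})) · (Π_{k=ℓ+1}^{n} (1 − x_ℓ·z_{σ(k)})) ]. Then P̂_n = Π_{i=1}^{n−1} (y_i + x_i) · Π_{1≤i<j≤n−1} (x_i + y_j) · Π_{1≤i<j≤n} (z_i − z_j). -/

import Mathlib

/-- Variable set for `ℤ[x_1,…,x_{n-1}, y_1,…,y_{n-1}, z_1,…,z_n]`. -/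
abbrev PVar (n : ℕ) := Fin (n - 1) ⊕ (Fin (n - 1) ⊕ Fin n)

/-- The variable `x_i`. -/
noncomputable def Xv {n : ℕ} (i : Fin (n - 1)) : MvPolynomial (PVar n) ℤ :=
  MvPolynomial.X (Sum.inl i)

/-- The variable `y_i`. -/
noncomputable def Yv {n : ℕ} (i : Fin (n - 1)) : MvPolynomial (PVar n) ℤ :=
  MvPolynomial.X (Sum.inr (Sum.inl i))

/-- The variable `z_i`. -/
noncomputable def Zv {n : ℕ} (i : Fin n) : MvPolynomial (PVar n) ℤ :=
  MvPolynomial.X (Sum.inr (Sum.inr i))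

/-- `P̂_n = ∑_{σ ∈ S_n} sgn(σ) ∏_{ℓ=1}^{n-1} (∏_{k=1}^{ℓ} (1 + y_ℓ z_{σ(k)}))
(∏_{k=ℓ+1}^{n} (1 - x_ℓ z_{σ(k)}))` (indices written 0-based). -/
noncomputable def Phat (n : ℕ) : MvPolynomial (PVar n) ℤ :=
  ∑ σ : Equiv.Perm (Fin n), (Equiv.Perm.sign σ : ℤ) •
    ∏ ℓ : Fin (n - 1),
      ((∏ k ∈ Finset.univ.filter (fun k : Fin n => (k : ℕ) ≤ (ℓ : ℕ)),
          (1 + Yv ℓ * Zv (σ k))) *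
        ∏ k ∈ Finset.univ.filter (fun k : Fin n => (ℓ : ℕ) < (k : ℕ)),
          (1 - Xv ℓ * Zv (σ k)))

open Polynomial Finset Matrix

variable {R : Type*} [CommRing R]

noncomputable def Pp (m : ℕ) (a b : ℕ → R) (k : ℕ) : R[X] :=
  (∏ ℓ ∈ range k, (1 - C (a ℓ) * X)) * ∏ ℓ ∈ Ico k m, (1 + C (b ℓ) * X)

noncomputable def Cmat (m : ℕ) (a b : ℕ → R) : Matrix (Fin (m+1)) (Fin (m+1)) R :=
  fun k j => (Pp m a b (k : ℕ)).coeff (j : ℕ)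

noncomputable def Emat (m : ℕ) : Matrix (Fin (m+2)) (Fin (m+2)) R :=
  fun k l => if l = k then 1 else if (l : ℕ) = (k : ℕ) + 1 then -1 else 0

lemma Emat_det (m : ℕ) : (Emat m : Matrix _ _ R).det = 1 := by
  rw [Matrix.det_of_upperTriangular]
  · simp [Emat]
  · intro k l hlt
    have h : (l : ℕ) < (k : ℕ) := hlt
    simp only [Emat]
    rw [if_neg (by simp only [Fin.ext_iff]; omega), if_neg (by omega)]

lemma Emat_mul_apply (m : ℕ) (A : Matrix (Fin (m+2)) (Fin (m+2)) R) (k j : Fin (m+2)) :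
    ((Emat m : Matrix (Fin (m+2)) (Fin (m+2)) R) * A) k j
      = if h : (k : ℕ) + 1 < m + 2 then A k j - A ⟨(k:ℕ)+1, h⟩ j else A k j := by
  have hsplit : ∀ l : Fin (m+2), Emat m k l =
      (if l = k then (1:R) else 0) + (if (l : ℕ) = (k : ℕ) + 1 then -1 else 0) := by
    intro l
    simp only [Emat]
    by_cases h1 : l = k
    · subst h1; simp
    · by_cases h2 : (l : ℕ) = (k : ℕ) + 1 <;> simp [h1, h2]
  by_cases h : (k : ℕ) + 1 < m + 2
  · have hc : ∀ l : Fin (m+2), ((l:ℕ) = (k:ℕ)+1) ↔ l = ⟨(k:ℕ)+1, h⟩ := by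
      intro l; rw [Fin.ext_iff]
    rw [dif_pos h]
    simp only [Matrix.mul_apply, hsplit, add_mul, one_mul, zero_mul, neg_one_mul, ite_mul,
      Finset.sum_add_distrib, hc, Finset.sum_ite_eq', Finset.mem_univ, if_true]
    ring
  · rw [dif_neg h]
    have hng : ∀ l : Fin (m+2), ¬ ((l : ℕ) = (k:ℕ)+1) := by intro l; omega
    simp [Matrix.mul_apply, hsplit, add_mul, hng, ite_mul]

lemma Pp_coeff_zero (m : ℕ) (a b : ℕ → R) (k : ℕ) : (Pp m a b k).coeff 0 = 1 := by
  simp [Pp, coeff_zero_eq_eval_zero, eval_prod]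

lemma Pp_sub (m : ℕ) (a b : ℕ → R) (k : ℕ) (hk : k < m + 1) :
    Pp (m+1) a b k - Pp (m+1) a b (k+1)
      = C (a k + b k) * X * Pp m a (fun i => b (i+1)) k := by
  have h1 : Pp (m+1) a b k
      = (∏ ℓ ∈ range k, (1 - C (a ℓ) * X)) *
        ((1 + C (b k) * X) * ∏ ℓ ∈ Ico (k+1) (m+1), (1 + C (b ℓ) * X)) := by
    rw [Pp, Finset.prod_eq_prod_Ico_succ_bot hk]
  have h2 : Pp (m+1) a b (k+1)
      = ((∏ ℓ ∈ range k, (1 - C (a ℓ) * X)) * (1 - C (a k) * X)) *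
        ∏ ℓ ∈ Ico (k+1) (m+1), (1 + C (b ℓ) * X) := by
    rw [Pp, Finset.prod_range_succ]
  have h3 : Pp m a (fun i => b (i+1)) k
      = (∏ ℓ ∈ range k, (1 - C (a ℓ) * X)) *
        ∏ ℓ ∈ Ico (k+1) (m+1), (1 + C (b ℓ) * X) := by
    rw [Pp]
    congr 1
    rw [← Finset.map_add_right_Ico k m 1, Finset.prod_map]
    rfl
  rw [h1, h2, h3, map_add]
  ring

lemma detCmat (m : ℕ) (a : ℕ → R) : ∀ b : ℕ → R,
    (Cmat m a b).det
      = (-1)^(m*(m+1)/2) * ∏ j ∈ range m, ∏ i ∈ range (j+1), (a i + b j) := by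
  induction m with
  | zero =>
      intro b
      rw [Matrix.det_fin_one]
      simp [Cmat, Pp_coeff_zero]
  | succ m ih =>
      intro b
      set b' : ℕ → R := fun i => b (i+1) with hb'
      set F : Matrix (Fin (m+2)) (Fin (m+2)) R := fun k j =>
        if hk : (k:ℕ) < m+1 then (C (a k + b k) * X * Pp m a b' (k:ℕ)).coeff (j:ℕ)
        else (Pp (m+1) a b (m+1)).coeff (j:ℕ) with hF
      have hE : (Emat m : Matrix _ _ R) * Cmat (m+1) a b = F := by
        ext k j
        rw [Emat_mul_apply]
        by_cases hk : (k:ℕ) < m+1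
        · rw [dif_pos (by omega : (k:ℕ)+1 < m+2), hF]
          dsimp only
          rw [dif_pos hk]
          show (Pp (m+1) a b (k:ℕ)).coeff j - (Pp (m+1) a b ((k:ℕ)+1)).coeff j = _
          rw [← Polynomial.coeff_sub, Pp_sub m a b (k:ℕ) hk]
        · have hk2 : (k:ℕ) = m+1 := by omega
          rw [dif_neg (by omega : ¬ ((k:ℕ)+1 < m+2)), hF]
          dsimp only
          rw [dif_neg hk]
          show (Pp (m+1) a b (k:ℕ)).coeff j = _
          rw [hk2]
      have hdet1 : (Cmat (m+1) a b).det = F.det := by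
        rw [← hE, Matrix.det_mul, Emat_det, one_mul]
      -- Laplace expansion along column 0
      have hcol : ∀ i : Fin (m+2), (i:ℕ) < m+1 → F i 0 = 0 := by
        intro i hi
        rw [hF]
        simp only [dif_pos hi, Fin.val_zero]
        rw [Polynomial.coeff_zero_eq_eval_zero]
        simp
      have hlast : F (Fin.last (m+1)) 0 = 1 := by
        rw [hF]
        dsimp only [Fin.val_last, Fin.val_zero]
        rw [dif_neg (lt_irrefl (m+1)), Pp_coeff_zero]
      have hdet2 : F.det = (-1)^(m+1) *
          (F.submatrix (Fin.last (m+1)).succAbove Fin.succ).det := by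
        rw [Matrix.det_succ_column_zero]
        rw [Finset.sum_eq_single (Fin.last (m+1))]
        · rw [hlast, Fin.val_last]; ring
        · intro i _ hne
          rw [hcol i (by
            have := Fin.is_lt i
            have : (i:ℕ) ≠ m+1 := fun h => hne (Fin.ext (by simp [h]))
            omega), mul_zero, zero_mul]
        · simp
      have hsub : F.submatrix (Fin.last (m+1)).succAbove Fin.succ
          = Matrix.of fun (k j : Fin (m+1)) => (a (k:ℕ) + b (k:ℕ)) * Cmat m a b' k j := by
        ext k j
        rw [Fin.succAbove_last]
        show F (Fin.castSucc k) (Fin.succ j) = _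
        rw [hF]
        simp only [Fin.coe_castSucc, Fin.is_lt, dif_pos, Fin.val_succ]
        rw [mul_assoc, Polynomial.coeff_C_mul, Polynomial.coeff_X_mul]
        rfl
      have hdet3 : (Matrix.of fun (k j : Fin (m+1)) => (a (k:ℕ) + b (k:ℕ)) * Cmat m a b' k j).det
          = (∏ k : Fin (m+1), (a (k:ℕ) + b (k:ℕ))) * (Cmat m a b').det :=
        Matrix.det_mul_column (fun k : Fin (m+1) => a (k:ℕ) + b (k:ℕ)) (Cmat m a b')
      rw [hdet1, hdet2, hsub, hdet3, ih b']
      -- final arithmetic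
      have hsign : (m+1)*(m+2)/2 = m*(m+1)/2 + (m+1) := by
        have he : m*(m+1) % 2 = 0 := Nat.even_iff.mp (Nat.even_mul_succ_self m)
        have hr : (m+1)*(m+2) = m*(m+1) + 2*(m+1) := by ring
        omega
      have hprod : ∏ j ∈ range (m+1), ∏ i ∈ range (j+1), (a i + b j)
          = (∏ j ∈ range m, ∏ i ∈ range (j+1), (a i + b' j)) *
            ∏ k ∈ range (m+1), (a k + b k) := by
        have : ∀ j, ∏ i ∈ range (j+1), (a i + b j)
            = (∏ i ∈ range j, (a i + b j)) * (a j + b j) := fun j => Finset.prod_range_succ _ _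
        rw [Finset.prod_congr rfl (fun j _ => this j), Finset.prod_mul_distrib]
        congr 1
        rw [Finset.prod_range_succ' (fun j => ∏ i ∈ range j, (a i + b j)) m]
        simp [hb']
      rw [hprod, hsign, pow_add, Fin.prod_univ_eq_prod_range (fun k => a k + b k)]
      ring

lemma Pp_natDegree_le (m : ℕ) (a b : ℕ → R) (k : ℕ) (hk : k ≤ m) :
    (Pp m a b k).natDegree ≤ m := by
  have h1 : (∏ ℓ ∈ range k, (1 - C (a ℓ) * X)).natDegree ≤ k := by
    refine le_trans (natDegree_prod_le _ _) ?_
    refine le_trans (Finset.sum_le_card_nsmul _ _ 1 ?_) (by simp)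
    intro ℓ _
    refine le_trans (natDegree_sub_le _ _) ?_
    have := le_trans (natDegree_C_mul_le (a ℓ) X) natDegree_X_le
    simp only [natDegree_one]
    omega
  have h2 : (∏ ℓ ∈ Ico k m, (1 + C (b ℓ) * X)).natDegree ≤ m - k := by
    refine le_trans (natDegree_prod_le _ _) ?_
    refine le_trans (Finset.sum_le_card_nsmul _ _ 1 ?_) (by simp [Nat.card_Ico])
    intro ℓ _
    refine le_trans (natDegree_add_le _ _) ?_
    have := le_trans (natDegree_C_mul_le (b ℓ) X) natDegree_X_le
    simp only [natDegree_one]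
    omega
  refine le_trans (natDegree_mul_le) ?_
  omega

lemma det_eval (m : ℕ) (a b : ℕ → R) (z : Fin (m+1) → R) :
    (Matrix.of fun (k j : Fin (m+1)) => (Pp m a b (k:ℕ)).eval (z j)).det
      = (Cmat m a b).det * ∏ i : Fin (m+1), ∏ j ∈ Ioi i, (z j - z i) := by
  have hM : (Matrix.of fun (k j : Fin (m+1)) => (Pp m a b (k:ℕ)).eval (z j))
      = Cmat m a b * (Matrix.vandermonde z)ᵀ := by
    ext k j
    rw [Matrix.mul_apply]
    simp only [Matrix.of_apply, Matrix.transpose_apply, Matrix.vandermonde_apply, Cmat]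
    rw [Polynomial.eval_eq_sum_range'
      (lt_of_le_of_lt (Pp_natDegree_le m a b (k:ℕ) (Fin.is_le k)) (Nat.lt_succ_self m)),
      ← Fin.sum_univ_eq_sum_range (fun i => (Pp m a b (k:ℕ)).coeff i * z j ^ i) (m+1)]
  rw [hM, Matrix.det_mul, Matrix.det_transpose, Matrix.det_vandermonde]

lemma Pp_eval (m : ℕ) (a b : ℕ → R) (k : ℕ) (x : R) :
    (Pp m a b k).eval x
      = (∏ ℓ ∈ range k, (1 - a ℓ * x)) * ∏ ℓ ∈ Ico k m, (1 + b ℓ * x) := by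
  simp [Pp, eval_prod]

lemma aux_range {M : Type*} [CommMonoid M] (m c : ℕ) (hc : c ≤ m) (f : ℕ → M) :
    ∏ ℓ ∈ univ.filter (fun ℓ : Fin m => (ℓ:ℕ) < c), f (ℓ:ℕ) = ∏ ℓ ∈ range c, f ℓ := by
  rw [Finset.prod_filter, Fin.prod_univ_eq_prod_range (fun ℓ => if ℓ < c then f ℓ else 1) m,
    ← Finset.prod_filter]
  congr 1
  ext ℓ
  simp only [Finset.mem_filter, Finset.mem_range]
  omega

lemma aux_Ico {M : Type*} [CommMonoid M] (m c : ℕ) (f : ℕ → M) :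
    ∏ ℓ ∈ univ.filter (fun ℓ : Fin m => c ≤ (ℓ:ℕ)), f (ℓ:ℕ) = ∏ ℓ ∈ Ico c m, f ℓ := by
  rw [Finset.prod_filter, Fin.prod_univ_eq_prod_range (fun ℓ => if c ≤ ℓ then f ℓ else 1) m,
    ← Finset.prod_filter]
  congr 1
  ext ℓ
  simp only [Finset.mem_filter, Finset.mem_range, Finset.mem_Ico]
  omega

noncomputable def aXv (n : ℕ) : ℕ → MvPolynomial (PVar n) ℤ :=
  fun i => if h : i < n - 1 then Xv ⟨i, h⟩ else 0
noncomputable def bYv (n : ℕ) : ℕ → MvPolynomial (PVar n) ℤ :=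
  fun i => if h : i < n - 1 then Yv ⟨i, h⟩ else 0

lemma aXv_val {n : ℕ} (ℓ : Fin (n-1)) : aXv n (ℓ:ℕ) = Xv ℓ := by simp [aXv]
lemma bYv_val {n : ℕ} (ℓ : Fin (n-1)) : bYv n (ℓ:ℕ) = Yv ℓ := by simp [bYv]


set_option maxHeartbeats 1600000

/-- the evaluation of `P̂_n` (Lemma `divislemma`). -/
theorem stmt7 (n : ℕ) (hn : 2 ≤ n) :
    Phat n
      = (∏ i : Fin (n - 1), (Yv i + Xv i)) *
        (∏ i : Fin (n - 1), ∏ j ∈ Finset.univ.filter (fun j => i < j), (Xv i + Yv j)) *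
        ∏ i : Fin n, ∏ j ∈ Finset.univ.filter (fun j => i < j), (Zv i - Zv j) := by
  obtain ⟨m, rfl⟩ : ∃ m, n = m + 1 := ⟨n - 1, by omega⟩
  set a : ℕ → MvPolynomial (PVar (m+1)) ℤ := aXv (m+1) with ha
  set b : ℕ → MvPolynomial (PVar (m+1)) ℤ := bYv (m+1) with hb
  -- the per-permutation identity
  have key : ∀ σ : Equiv.Perm (Fin (m+1)),
      (∏ ℓ : Fin m,
        ((∏ k ∈ Finset.univ.filter (fun k : Fin (m+1) => (k:ℕ) ≤ (ℓ:ℕ)),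
            (1 + Yv (n := m+1) ℓ * Zv (σ k))) *
          ∏ k ∈ Finset.univ.filter (fun k : Fin (m+1) => (ℓ:ℕ) < (k:ℕ)),
            (1 - Xv (n := m+1) ℓ * Zv (σ k))))
      = ∏ k : Fin (m+1), (Pp m a b (k:ℕ)).eval (Zv (σ k)) := by
    intro σ
    have hR : ∀ k : Fin (m+1), (Pp m a b (k:ℕ)).eval (Zv (σ k))
        = (∏ ℓ ∈ univ.filter (fun ℓ : Fin m => (k:ℕ) ≤ (ℓ:ℕ)), (1 + Yv (n := m+1) ℓ * Zv (σ k))) *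
          ∏ ℓ ∈ univ.filter (fun ℓ : Fin m => (ℓ:ℕ) < (k:ℕ)), (1 - Xv (n := m+1) ℓ * Zv (σ k)) := by
      intro k
      rw [Pp_eval,
        ← aux_range m (k:ℕ) (Fin.is_le k) (fun ℓ => 1 - a ℓ * Zv (σ k)),
        ← aux_Ico m (k:ℕ) (fun ℓ => 1 + b ℓ * Zv (σ k)), mul_comm]
      congr 1
      · exact Finset.prod_congr rfl fun ℓ _ => by rw [hb, bYv_val]
      · exact Finset.prod_congr rfl fun ℓ _ => by rw [ha, aXv_val]
    rw [Finset.prod_congr rfl fun k _ => hR k, Finset.prod_mul_distrib,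
      Finset.prod_mul_distrib]
    congr 1
    · exact Finset.prod_comm' (fun ℓ k => by simp)
    · exact Finset.prod_comm' (fun ℓ k => by simp)
  -- Phat as a determinant
  have step1 : Phat (m+1)
      = (Matrix.of fun (i k : Fin (m+1)) => (Pp m a b (k:ℕ)).eval (Zv i)).det := by
    rw [Matrix.det_apply]
    unfold Phat
    refine Finset.sum_congr rfl fun σ _ => ?_
    rw [Units.smul_def]
    congr 1
    exact key σ
  have step2 : (Matrix.of fun (i k : Fin (m+1)) => (Pp m a b (k:ℕ)).eval (Zv i))
      = (Matrix.of fun (k j : Fin (m+1)) => (Pp m a b (k:ℕ)).eval (Zv j))ᵀ := by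
    ext i k; rfl
  -- the x/y product bridge
  have hxy : ∏ j ∈ range m, ∏ i ∈ range (j+1), (a i + b j)
      = (∏ i : Fin (m+1-1), (Yv i + Xv i)) *
        ∏ i : Fin (m+1-1), ∏ j ∈ univ.filter (fun j => i < j), (Xv i + Yv j) := by
    have h1 : ∀ j : Fin (m+1-1), ∏ i ∈ range ((j:ℕ)+1), (a i + b (j:ℕ))
        = (Yv j + Xv j) * ∏ i ∈ univ.filter (fun i : Fin (m+1-1) => i < j), (Xv i + Yv j) := by
      intro j
      rw [← aux_range (m+1-1) ((j:ℕ)+1) (by omega) (fun i => a i + b (j:ℕ))]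
      have hset : univ.filter (fun i : Fin (m+1-1) => (i:ℕ) < (j:ℕ)+1)
          = insert j (univ.filter (fun i : Fin (m+1-1) => i < j)) := by
        ext i
        simp only [Finset.mem_filter, Finset.mem_univ, true_and, Finset.mem_insert,
          Fin.ext_iff, Fin.lt_def]
        omega
      rw [hset, Finset.prod_insert
        (by simp only [Finset.mem_filter, Finset.mem_univ, true_and]; exact lt_irrefl j)]
      congr 1
      · rw [ha, hb, aXv_val, bYv_val]; ring
      · exact Finset.prod_congr rfl fun i _ => by rw [ha, hb, aXv_val, bYv_val]
    have h0 : ∏ j ∈ range m, ∏ i ∈ range (j+1), (a i + b j)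
        = ∏ j : Fin (m+1-1), ∏ i ∈ range ((j:ℕ)+1), (a i + b (j:ℕ)) :=
      (Fin.prod_univ_eq_prod_range (fun j => ∏ i ∈ range (j+1), (a i + b j)) (m+1-1)).symm
    rw [h0, Finset.prod_congr rfl fun j _ => h1 j, Finset.prod_mul_distrib]
    congr 1
    exact Finset.prod_comm' (fun j i => by simp)
  -- the z product sign bridge
  have hz : (∏ i : Fin (m+1), ∏ j ∈ univ.filter (fun j => i < j), (Zv i - Zv j))
      = (-1)^(m*(m+1)/2) * ∏ i : Fin (m+1), ∏ j ∈ Ioi i, (Zv j - Zv i) := by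
    have h1 : ∀ i : Fin (m+1), (univ.filter (fun j => i < j)) = Ioi i := by
      intro i; ext j; simp
    have h2 : ∀ i : Fin (m+1), ∏ j ∈ Ioi i, (Zv i - Zv j)
        = (-1:MvPolynomial (PVar (m+1)) ℤ)^((Ioi i).card) * ∏ j ∈ Ioi i, (Zv j - Zv i) := by
      intro i
      rw [← Finset.prod_const, ← Finset.prod_mul_distrib]
      exact Finset.prod_congr rfl fun j _ => by ring
    rw [Finset.prod_congr rfl fun i _ => by rw [h1 i, h2 i], Finset.prod_mul_distrib,
      Finset.prod_pow_eq_pow_sum]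
    congr 2
    have hc : ∀ i : Fin (m+1), (Ioi i).card = m - (i:ℕ) := by
      intro i; rw [Fin.card_Ioi]; omega
    rw [Finset.sum_congr rfl fun i _ => hc i,
      Fin.sum_univ_eq_sum_range (fun i => m - i) (m+1)]
    have hrefl := Finset.sum_range_reflect (fun j => j) (m+1)
    simp only [Nat.add_sub_cancel] at hrefl
    have hid := Finset.sum_range_id_mul_two (m+1)
    have hr : (m+1) * (m+1-1) = m*(m+1) := by simp; ring
    have he : m*(m+1) % 2 = 0 := Nat.even_iff.mp (Nat.even_mul_succ_self m)
    omega
  show Phat (m+1)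
      = (∏ i : Fin (m+1-1), (Yv i + Xv i)) *
        (∏ i : Fin (m+1-1), ∏ j ∈ Finset.univ.filter (fun j => i < j), (Xv i + Yv j)) *
        ∏ i : Fin (m+1), ∏ j ∈ Finset.univ.filter (fun j => i < j), (Zv i - Zv j)
  rw [step1, step2, Matrix.det_transpose, det_eval, detCmat m a b, hxy, hz]
  ring
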